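/- Suppose a = 0. Then the quadratic form Q = b·z2² + c·z3² + 2d·z1z2 + 2e·z1z3 + 2f·z2z3 factors as Q = L1·L2 for some degree-one elements L1, L2 of S if and only if D7(M) = (μ23·cd² − 2def + be²)·(μ13μ21·cd² − 2def + μ12μ23μ31·be²) = 0. -/

import Mathlib

/-- `Q = L·L'` in the skew polynomial algebra on three generators (relations
`zj·zi = μij·zi·zj` for `i < j`), expressed via coefficients; here
`L = p.1·z1 + p.2.1·z2 + p.2.2·z3` and `L' = q.1·z1 + q.2.1·z2 + q.2.2·z3`. -/
def IsFactorization3 {k : Type*} [Field k] (μ12 μ13 μ23 a b c d e f : k)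
    (p q : k × k × k) : Prop :=
  p.1 * q.1 = a ∧ p.2.1 * q.2.1 = b ∧ p.2.2 * q.2.2 = c ∧
  p.1 * q.2.1 + μ12 * p.2.1 * q.1 = 2 * d ∧
  p.1 * q.2.2 + μ13 * p.2.2 * q.1 = 2 * e ∧
  p.2.1 * q.2.2 + μ23 * p.2.2 * q.2.1 = 2 * f

/-- When `a = 0`, the quadratic form
`Q = b·z2² + c·z3² + 2d·z1z2 + 2e·z1z3 + 2f·z2z3` factors as a product of two
degree-one elements if and only if `D7(M) = 0`. -/
theorem factors_iff_D7_eq_zero {k : Type*} [Field k] [IsAlgClosed k]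
    (h2 : (2 : k) ≠ 0) (μ12 μ13 μ23 : k)
    (hμ12 : μ12 ≠ 0) (hμ13 : μ13 ≠ 0) (hμ23 : μ23 ≠ 0)
    (b c d e f : k) :
    (∃ p q : k × k × k, IsFactorization3 μ12 μ13 μ23 0 b c d e f p q) ↔
      (μ23 * c * d ^ 2 - 2 * d * e * f + b * e ^ 2) *
        (μ13 * μ12⁻¹ * c * d ^ 2 - 2 * d * e * f +
          μ12 * μ23 * μ13⁻¹ * b * e ^ 2) = 0 := by
  have h4 : (2 : k) * 2 ≠ 0 := mul_ne_zero h2 h2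
  constructor
  · rintro ⟨⟨p1, p2, p3⟩, ⟨q1, q2, q3⟩, h1, hb, hc, hd, he, hf⟩
    simp only [IsFactorization3] at h1 hb hc hd he hf
    rcases mul_eq_zero.mp h1 with h | h
    · -- p1 = 0 : second factor vanishes
      apply mul_eq_zero_of_right
      subst h
      have hG : μ13 ^ 2 * c * d ^ 2 - 2 * μ12 * μ13 * d * e * f +
          μ12 ^ 2 * μ23 * b * e ^ 2 = 0 := by
        have key : (2 : k) * 2 * (μ13 ^ 2 * c * d ^ 2 - 2 * μ12 * μ13 * d * e * f +
            μ12 ^ 2 * μ23 * b * e ^ 2) = 0 := by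
          linear_combination
            (μ12 * μ13 * (2 * e) * (2 * f) - μ13 ^ 2 * c * (μ12 * p2 * q1 + 2 * d)) * hd +
            (-(μ13 ^ 2) * (μ12 * p2 * q1) ^ 2) * hc +
            (μ12 * μ13 * (μ12 * p2 * q1) * (2 * f) -
              μ12 ^ 2 * μ23 * b * (μ13 * p3 * q1 + 2 * e)) * he +
            (μ12 * μ13 * (μ12 * p2 * q1) * (μ13 * p3 * q1)) * hf +
            (-(μ12 ^ 2 * μ23) * (μ13 * p3 * q1) ^ 2) * hb
        exact (mul_eq_zero.mp key).resolve_left h4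
      have hrw : μ13 * μ12⁻¹ * c * d ^ 2 - 2 * d * e * f + μ12 * μ23 * μ13⁻¹ * b * e ^ 2 =
          (μ12 * μ13)⁻¹ * (μ13 ^ 2 * c * d ^ 2 - 2 * μ12 * μ13 * d * e * f +
            μ12 ^ 2 * μ23 * b * e ^ 2) := by
        field_simp
      rw [hrw, hG, mul_zero]
    · -- q1 = 0 : first factor vanishes
      apply mul_eq_zero_of_left
      subst h
      have key : (2 : k) * 2 * (μ23 * c * d ^ 2 - 2 * d * e * f + b * e ^ 2) = 0 := by
        linear_combination
          (2 * e * (2 * f) - μ23 * c * (p1 * q2 + 2 * d)) * hd +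
          (-μ23 * (p1 * q2) ^ 2) * hc +
          (p1 * q2 * (2 * f) - b * (p1 * q3 + 2 * e)) * he +
          (p1 * q2 * (p1 * q3)) * hf +
          (-(p1 * q3) ^ 2) * hb
      exact (mul_eq_zero.mp key).resolve_left h4
  · intro h
    rcases mul_eq_zero.mp h with hF | hF
    · -- first factor vanishes: take q1 = 0
      by_cases hd0 : d = 0
      · subst hd0
        by_cases he0 : e = 0
        · subst he0
          -- binary quadratic case
          by_cases hb0 : b = 0
          · subst hb0
            refine ⟨(0, 0, 1), (0, 2 * f / μ23, c), ?_, ?_, ?_, ?_, ?_, ?_⟩ <;>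
              simp [IsFactorization3] <;> field_simp
          · obtain ⟨s, hs⟩ := IsAlgClosed.exists_pow_nat_eq
              ((2 * f) ^ 2 - 4 * μ23 * b * c) (n := 2) (by norm_num)
            refine ⟨(0, 1, (2 * f + s) / (2 * μ23 * b)),
              (0, b, (2 * f - s) / 2), ?_, ?_, ?_, ?_, ?_, ?_⟩
            · simp
            · simp
            · show (2 * f + s) / (2 * μ23 * b) * ((2 * f - s) / 2) = c
              field_simp
              linear_combination -hs
            · simp
            · simp
            · show 1 * ((2 * f - s) / 2) + μ23 * ((2 * f + s) / (2 * μ23 * b)) * b = 2 * f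
              field_simp
              ring
        · -- d = 0, e ≠ 0 : b = 0
          have hb0 : b = 0 := by
            have h' : b * e ^ 2 = 0 := by linear_combination hF
            exact (mul_eq_zero.mp h').resolve_right (pow_ne_zero 2 he0)
          refine ⟨(1, f / e, c / (2 * e)), (0, 0, 2 * e), ?_, ?_, ?_, ?_, ?_, ?_⟩
          · simp
          · simp [hb0]
          · show c / (2 * e) * (2 * e) = c
            field_simp
          · show 1 * 0 + μ12 * (f / e) * 0 = 2 * 0
            ring
          · show 1 * (2 * e) + μ13 * (c / (2 * e)) * 0 = 2 * e
            ring
          · show f / e * (2 * e) + μ23 * (c / (2 * e)) * 0 = 2 * f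
            field_simp
            ring
      · by_cases he0 : e = 0
        · subst he0
          -- d ≠ 0, e = 0 : c = 0
          have hc0 : c = 0 := by
            have h' : c * (μ23 * d ^ 2) = 0 := by linear_combination hF
            exact (mul_eq_zero.mp h').resolve_right
              (mul_ne_zero hμ23 (pow_ne_zero 2 hd0))
          refine ⟨(1, b / (2 * d), f / (μ23 * d)), (0, 2 * d, 0), ?_, ?_, ?_, ?_, ?_, ?_⟩
          · simp
          · show b / (2 * d) * (2 * d) = b
            field_simp
          · simp [hc0]
          · show 1 * (2 * d) + μ12 * (b / (2 * d)) * 0 = 2 * d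
            ring
          · show 1 * 0 + μ13 * (f / (μ23 * d)) * 0 = 2 * 0
            ring
          · show b / (2 * d) * 0 + μ23 * (f / (μ23 * d)) * (2 * d) = 2 * f
            field_simp
            ring
        · -- d ≠ 0, e ≠ 0
          refine ⟨(2 * d * e, b * e, c * d), (0, e⁻¹, d⁻¹), ?_, ?_, ?_, ?_, ?_, ?_⟩
          · simp
          · show b * e * e⁻¹ = b
            field_simp
          · show c * d * d⁻¹ = c
            field_simp
          · show 2 * d * e * e⁻¹ + μ12 * (b * e) * 0 = 2 * d
            field_simp
            ring
          · show 2 * d * e * d⁻¹ + μ13 * (c * d) * 0 = 2 * e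
            field_simp
            ring
          · show b * e * d⁻¹ + μ23 * (c * d) * e⁻¹ = 2 * f
            field_simp
            linear_combination hF
    · -- second factor vanishes: take p1 = 0
      by_cases hd0 : d = 0
      · subst hd0
        by_cases he0 : e = 0
        · subst he0
          by_cases hb0 : b = 0
          · subst hb0
            refine ⟨(0, 0, 1), (0, 2 * f / μ23, c), ?_, ?_, ?_, ?_, ?_, ?_⟩ <;>
              simp [IsFactorization3] <;> field_simp
          · obtain ⟨s, hs⟩ := IsAlgClosed.exists_pow_nat_eq
              ((2 * f) ^ 2 - 4 * μ23 * b * c) (n := 2) (by norm_num)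
            refine ⟨(0, 1, (2 * f + s) / (2 * μ23 * b)),
              (0, b, (2 * f - s) / 2), ?_, ?_, ?_, ?_, ?_, ?_⟩
            · simp
            · simp
            · show (2 * f + s) / (2 * μ23 * b) * ((2 * f - s) / 2) = c
              field_simp
              linear_combination -hs
            · simp
            · simp
            · show 1 * ((2 * f - s) / 2) + μ23 * ((2 * f + s) / (2 * μ23 * b)) * b = 2 * f
              field_simp
              ring
        · -- d = 0, e ≠ 0 : b = 0
          have hb0 : b = 0 := by
            have h' : b * (μ12 * μ23 * μ13⁻¹ * e ^ 2) = 0 := by linear_combination hF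
            refine (mul_eq_zero.mp h').resolve_right ?_
            exact mul_ne_zero (mul_ne_zero (mul_ne_zero hμ12 hμ23) (inv_ne_zero hμ13))
              (pow_ne_zero 2 he0)
          refine ⟨(0, 0, μ13⁻¹), (2 * e, 2 * μ13 * f / μ23, μ13 * c), ?_, ?_, ?_, ?_, ?_, ?_⟩
          · simp
          · simp [hb0]
          · show μ13⁻¹ * (μ13 * c) = c
            field_simp
          · show 0 * (2 * μ13 * f / μ23) + μ12 * 0 * (2 * e) = 2 * 0
            ring
          · show 0 * (μ13 * c) + μ13 * μ13⁻¹ * (2 * e) = 2 * e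
            field_simp
            ring
          · show 0 * (μ13 * c) + μ23 * μ13⁻¹ * (2 * μ13 * f / μ23) = 2 * f
            field_simp
            ring
      · by_cases he0 : e = 0
        · subst he0
          -- d ≠ 0, e = 0 : c = 0
          have hc0 : c = 0 := by
            have h' : c * (μ13 * μ12⁻¹ * d ^ 2) = 0 := by linear_combination hF
            refine (mul_eq_zero.mp h').resolve_right ?_
            exact mul_ne_zero (mul_ne_zero hμ13 (inv_ne_zero hμ12)) (pow_ne_zero 2 hd0)
          refine ⟨(0, μ12⁻¹, 0), (2 * d, μ12 * b, 2 * μ12 * f), ?_, ?_, ?_, ?_, ?_, ?_⟩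
          · simp
          · show μ12⁻¹ * (μ12 * b) = b
            field_simp
          · simp [hc0]
          · show 0 * (μ12 * b) + μ12 * μ12⁻¹ * (2 * d) = 2 * d
            field_simp
            ring
          · show 0 * (2 * μ12 * f) + μ13 * 0 * (2 * d) = 2 * 0
            ring
          · show μ12⁻¹ * (2 * μ12 * f) + μ23 * 0 * (μ12 * b) = 2 * f
            field_simp
            ring
        · -- d ≠ 0, e ≠ 0
          have hG : μ13 ^ 2 * c * d ^ 2 - 2 * μ12 * μ13 * d * e * f +
              μ12 ^ 2 * μ23 * b * e ^ 2 = 0 := by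
            have hrw : μ13 ^ 2 * c * d ^ 2 - 2 * μ12 * μ13 * d * e * f +
                μ12 ^ 2 * μ23 * b * e ^ 2 =
                μ12 * μ13 * (μ13 * μ12⁻¹ * c * d ^ 2 - 2 * d * e * f +
                  μ12 * μ23 * μ13⁻¹ * b * e ^ 2) := by
              field_simp
            rw [hrw, hF, mul_zero]
          refine ⟨(0, (μ12 * e)⁻¹, (μ13 * d)⁻¹),
            (2 * d * e, μ12 * b * e, μ13 * c * d), ?_, ?_, ?_, ?_, ?_, ?_⟩
          · simp
          · show (μ12 * e)⁻¹ * (μ12 * b * e) = b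
            field_simp
          · show (μ13 * d)⁻¹ * (μ13 * c * d) = c
            field_simp
          · show 0 * (μ12 * b * e) + μ12 * (μ12 * e)⁻¹ * (2 * d * e) = 2 * d
            field_simp
            ring
          · show 0 * (μ13 * c * d) + μ13 * (μ13 * d)⁻¹ * (2 * d * e) = 2 * e
            field_simp
            ring
          · show (μ12 * e)⁻¹ * (μ13 * c * d) + μ23 * (μ13 * d)⁻¹ * (μ12 * b * e) = 2 * f
            field_simp
            linear_combination hG
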